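/- If a sequence of nonnegative reals d_k and a real τ satisfy, for every sufficiently small δ > 0, the inequality (32π²/α_k²) log(λ_k/β_k²) ≤ (1/8π²)(d_kτ - 32π²/α_k)² log δ + C(d_k² + d_k + log d_k) + C, where α_k → 32π², d_k → d ∈ (0,∞), and λ_k/β_k² is bounded away from 0, then dτ = 1. -/
import Mathlib


open Real Filter

/-- Abstract version of the capacity conclusion: if nonnegative reals `d_k → d ∈ (0,∞)`,
`α_k → 32π²`, `λ_k/β_k²` is bounded below away from `0`, and for every sufficiently
small `δ > 0` and every `k`,
`(32π²/α_k²) log(λ_k/β_k²) ≤ (1/8π²)(d_kτ - 32π²/α_k)² log δ + C(d_k² + d_k + log d_k) + C`,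
then `dτ = 1`. -/
theorem stmt_18 (d : ℕ → ℝ) (hd : ∀ k, 0 ≤ d k) (τ dlim : ℝ)
    (hdlim : Tendsto d atTop (nhds dlim)) (hdlim_pos : 0 < dlim)
    (α : ℕ → ℝ) (hα : Tendsto α atTop (nhds (32 * π ^ 2)))
    (lb : ℕ → ℝ) -- `lb k = λ_k / β_k²`
    (c₀ : ℝ) (hc₀ : 0 < c₀) (hlb : ∀ k, c₀ ≤ lb k)
    (C : ℝ)
    (hineq : ∃ δ₁ > (0:ℝ), ∀ δ, 0 < δ → δ < δ₁ → ∀ k,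
      32 * π ^ 2 / (α k) ^ 2 * Real.log (lb k) ≤
        1 / (8 * π ^ 2) * (d k * τ - 32 * π ^ 2 / α k) ^ 2 * Real.log δ +
          C * ((d k) ^ 2 + d k + Real.log (d k)) + C) :
    dlim * τ = 1 := by
  by_contra hne
  obtain ⟨δ₁, hδ₁, hineq⟩ := hineq
  have hπ : (0:ℝ) < π := Real.pi_pos
  have hπ2 : (0:ℝ) < 32 * π ^ 2 := by positivity
  set K : ℝ := C * (dlim ^ 2 + dlim + Real.log dlim) + C with hK
  set A : ℝ := 1 / (8 * π ^ 2) * (dlim * τ - 1) ^ 2 with hA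
  have hApos : 0 < A := by
    have hne' : dlim * τ - 1 ≠ 0 := sub_ne_zero.mpr hne
    positivity
  set L : ℝ := 32 * π ^ 2 / (32 * π ^ 2) ^ 2 * Real.log c₀ with hL
  have key : ∀ δ : ℝ, 0 < δ → δ < δ₁ → L ≤ A * Real.log δ + K := by
    intro δ hδ hδlt
    have h1 : Tendsto (fun k => 32 * π ^ 2 / (α k) ^ 2 * Real.log c₀) atTop (nhds L) := by
      rw [hL]
      exact (tendsto_const_nhds.div (hα.pow 2) (by positivity)).mul_const _
    have hα1 : Tendsto (fun k => 32 * π ^ 2 / α k) atTop (nhds 1) := by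
      have h := Tendsto.div
        (tendsto_const_nhds : Tendsto (fun _ : ℕ => 32 * π ^ 2) atTop (nhds (32 * π ^ 2)))
        hα hπ2.ne'
      rwa [div_self hπ2.ne'] at h
    have h2a : Tendsto (fun k => (d k * τ - 32 * π ^ 2 / α k) ^ 2) atTop
        (nhds ((dlim * τ - 1) ^ 2)) := ((hdlim.mul_const τ).sub hα1).pow 2
    have hlogd : Tendsto (fun k => Real.log (d k)) atTop (nhds (Real.log dlim)) :=
      hdlim.log hdlim_pos.ne'
    have h2 : Tendsto (fun k => 1 / (8 * π ^ 2) * (d k * τ - 32 * π ^ 2 / α k) ^ 2 *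
        Real.log δ + C * ((d k) ^ 2 + d k + Real.log (d k)) + C) atTop
        (nhds (A * Real.log δ + K)) := by
      rw [hA, hK, ← add_assoc]
      exact (((tendsto_const_nhds.mul h2a).mul_const _).add
        (tendsto_const_nhds.mul (((hdlim.pow 2).add hdlim).add hlogd))).add tendsto_const_nhds
    refine le_of_tendsto_of_tendsto' h1 h2 (fun k => ?_)
    refine le_trans ?_ (hineq δ hδ hδlt k)
    exact mul_le_mul_of_nonneg_left (Real.log_le_log hc₀ (hlb k)) (by positivity)
  set δ : ℝ := min (Real.exp ((L - K) / A - 1)) (δ₁ / 2) with hδdef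
  have hδpos : 0 < δ := lt_min (Real.exp_pos _) (half_pos hδ₁)
  have hδlt : δ < δ₁ := lt_of_le_of_lt (min_le_right _ _) (half_lt_self hδ₁)
  have hkey := key δ hδpos hδlt
  have hlogδ : Real.log δ ≤ (L - K) / A - 1 := by
    calc Real.log δ ≤ Real.log (Real.exp ((L - K) / A - 1)) :=
          Real.log_le_log hδpos (min_le_left _ _)
      _ = (L - K) / A - 1 := Real.log_exp _
  have hmul : A * Real.log δ ≤ A * ((L - K) / A - 1) :=
    mul_le_mul_of_nonneg_left hlogδ hApos.le
  have heq : A * ((L - K) / A - 1) = L - K - A := by field_simp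
  linarith
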